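/- arXiv:2010.14033 — 2 statements merged into one kernel-verified Lean document; each statement's English description precedes it below -/
import Mathlib

section
/- Let P be an m-partition of a finite set X and let f ∈ Σ(X,P). Then f is unit-regular in T(X,P) if and only if |X_i| = |X_j| whenever i χ^(f) = j. -/
/-- `B : ι → Set X` is a partition of `X` into nonempty pairwise disjoint blocks. -/
def IsPartition {X ι : Type*} (B : ι → Set X) : Prop :=
  (∀ i, (B i).Nonempty) ∧ (Pairwise fun i j => Disjoint (B i) (B j)) ∧ (⋃ i, B i) = Set.univ

/-- membership in `T(X,P)`: every block maps into some block. -/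
def MapsInto {X ι : Type*} (B : ι → Set X) (f : X → X) : Prop := ∀ i, ∃ j, f '' B i ⊆ B j

/-- membership in `Γ(X,P)`: every block maps onto some block. -/
def MapsOnto {X ι : Type*} (B : ι → Set X) (f : X → X) : Prop := ∀ i, ∃ j, f '' B i = B j

/-- membership in `Σ(X,P)`. -/
def InSigma {X ι : Type*} (B : ι → Set X) (f : X → X) : Prop :=
  MapsInto B f ∧ ∀ i, (Set.range f ∩ B i).Nonempty

/-- membership in `S(X,P)`, the group of units of `T(X,P)`. -/
def IsUnitT {X ι : Type*} (B : ι → Set X) (f : X → X) : Prop :=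
  MapsInto B f ∧ ∃ g, MapsInto B g ∧ f ∘ g = id ∧ g ∘ f = id

/-- Stirling numbers of the second kind. -/
def stirling2 : ℕ → ℕ → ℕ
  | 0, 0 => 1
  | 0, _ + 1 => 0
  | _ + 1, 0 => 0
  | n + 1, k + 1 => (k + 1) * stirling2 n (k + 1) + stirling2 n k

lemma exists_bijOn_extend {X : Type*} [Finite X] {A A' S : Set X} (hS : S ⊆ A')
    (hcard : Nat.card A' = Nat.card A) (s : X → X) (hmaps : Set.MapsTo s S A)
    (hinj : Set.InjOn s S) :
    ∃ u : X → X, Set.BijOn u A' A ∧ ∀ y ∈ S, u y = s y := by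
  classical
  set T := s '' S with hT
  have hTA : T ⊆ A := Set.mapsTo_iff_image_subset.mp hmaps
  have hcardST : T.ncard = S.ncard := Set.ncard_image_of_injOn hinj
  have hcard' : A'.ncard = A.ncard := by
    rw [← Nat.card_coe_set_eq, ← Nat.card_coe_set_eq]; exact hcard
  have hdc : (A' \ S).ncard = (A \ T).ncard := by
    rw [Set.ncard_diff hS, Set.ncard_diff hTA, hcardST, hcard']
  have : Nonempty ((A' \ S : Set X) ≃ (A \ T : Set X)) := by
    rw [← Finite.card_eq]
    simpa [Nat.card_coe_set_eq] using hdc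
  obtain ⟨e⟩ := this
  refine ⟨fun y => if h : y ∈ S then s y else if h' : y ∈ A' then (e ⟨y, h', h⟩ : X) else y,
    ⟨?_, ?_, ?_⟩, ?_⟩
  · intro y hy
    by_cases h : y ∈ S
    · simpa [h] using hmaps h
    · simpa [h, hy] using (e ⟨y, hy, h⟩).2.1
  · intro y₁ hy₁ y₂ hy₂ heq
    by_cases h₁ : y₁ ∈ S <;> by_cases h₂ : y₂ ∈ S
    · simp [h₁, h₂] at heq
      exact hinj h₁ h₂ heq
    · simp [h₁, h₂, hy₁, hy₂] at heq
      exact absurd (heq ▸ Set.mem_image_of_mem s h₁) (e ⟨y₂, hy₂, h₂⟩).2.2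
    · simp [h₁, h₂, hy₁, hy₂] at heq
      exact absurd (heq ▸ Set.mem_image_of_mem s h₂) (e ⟨y₁, hy₁, h₁⟩).2.2
    · simp [h₁, h₂, hy₁, hy₂] at heq
      exact Subtype.ext_iff.mp (e.injective (Subtype.ext heq))
  · intro z hz
    by_cases hzT : z ∈ T
    · obtain ⟨y, hyS, rfl⟩ := hzT
      exact ⟨y, hS hyS, by simp [hyS]⟩
    · obtain ⟨w, hw⟩ := e.surjective ⟨z, hz, hzT⟩
      refine ⟨w, w.2.1, ?_⟩
      have : (w : X) ∉ S := w.2.2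
      simp only [this, w.2.1, dif_neg, dif_pos, not_false_iff]
      rw [show (⟨(w:X), w.2.1, w.2.2⟩ : (A' \ S : Set X)) = w from Subtype.ext rfl]; rw [hw]
  · intro y hy
    simp [hy]


/-- Characterization of unit-regular elements of Σ(X,P) for finite X. -/
theorem unitRegular_iff_Sigma {X : Type*} [Finite X] {m : ℕ} (B : Fin m → Set X)
    (hP : IsPartition B) (f : X → X) (hf : InSigma B f) :
    (∃ u, IsUnitT B u ∧ f ∘ u ∘ f = f) ↔
      ∀ i j, f '' B i ⊆ B j → Nat.card (B i) = Nat.card (B j) := by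
  classical
  obtain ⟨hne, hdisj, hcover⟩ := hP
  obtain ⟨hmaps, hrange⟩ := hf
  have huniq : ∀ {x : X} {i j}, x ∈ B i → x ∈ B j → i = j := by
    intro x i j hi hj
    by_contra h
    exact Set.disjoint_left.mp (hdisj h) hi hj
  have hmem : ∀ x : X, ∃ i, x ∈ B i := by
    intro x
    have : x ∈ ⋃ i, B i := hcover ▸ Set.mem_univ x
    simpa using this
  choose idx hidx using hmem
  choose χ hχ using hmaps
  have hχuniq : ∀ i j, f '' B i ⊆ B j → j = χ i := by
    intro i j h
    obtain ⟨x, hx⟩ := hne i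
    exact huniq (h ⟨x, hx, rfl⟩) (hχ i ⟨x, hx, rfl⟩)
  have hχsurj : Function.Surjective χ := by
    intro j
    obtain ⟨y, ⟨x, rfl⟩, hy⟩ := hrange j
    exact ⟨idx x, huniq (hχ (idx x) ⟨x, hidx x, rfl⟩) hy⟩
  have hχinj : Function.Injective χ := Finite.injective_iff_surjective.mpr hχsurj
  constructor
  · rintro ⟨u, ⟨humaps, g, hgmaps, hug, hgu⟩, hfuf⟩ i j hij
    have huinj : Function.Injective u :=
      Function.LeftInverse.injective (g := g) (congrFun hgu)
    choose τ hτ using humaps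
    -- u '' B k = B (τ k)
    have himg : ∀ k, u '' B k = B (τ k) := by
      intro k
      refine Set.Subset.antisymm (hτ k) ?_
      choose σ hσ using hgmaps
      obtain ⟨x, hx⟩ := hne k
      have hστ : σ (τ k) = k := by
        have h1 : u x ∈ B (τ k) := hτ k ⟨x, hx, rfl⟩
        have h2 : g (u x) ∈ B (σ (τ k)) := hσ (τ k) ⟨u x, h1, rfl⟩
        rw [show g (u x) = x from congrFun hgu x] at h2
        exact huniq h2 hx
      intro z hz
      have hgz : g z ∈ B k := hστ ▸ hσ (τ k) ⟨z, hz, rfl⟩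
      exact ⟨g z, hgz, congrFun hug z⟩
    have hcardτ : ∀ k, Nat.card (B k) = Nat.card (B (τ k)) := by
      intro k
      rw [Nat.card_coe_set_eq, Nat.card_coe_set_eq, ← himg k,
        Set.ncard_image_of_injective _ huinj]
    -- χ (τ k) = k for all k
    have hχτ : ∀ k, χ (τ k) = k := by
      intro k
      obtain ⟨y, ⟨x, rfl⟩, hy⟩ := hrange k
      have h1 : u (f x) ∈ B (τ k) := hτ k ⟨f x, hy, rfl⟩
      have h2 : f (u (f x)) ∈ B (χ (τ k)) := hχ (τ k) ⟨u (f x), h1, rfl⟩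
      rw [show f (u (f x)) = f x from congrFun hfuf x] at h2
      exact huniq h2 hy
    have hji : τ j = i := by
      have := hχuniq i j hij
      exact hχinj (by rw [hχτ j, this])
    rw [hcardτ j, hji]
  · intro hcard
    cases isEmpty_or_nonempty X with
    | inl hE =>
      refine ⟨id, ⟨?_, id, ?_, rfl, rfl⟩, ?_⟩
      · intro i; exact absurd (hne i) (by simp [Set.eq_empty_of_isEmpty])
      · intro i; exact absurd (hne i) (by simp [Set.eq_empty_of_isEmpty])
      · funext x; exact isEmptyElim x
    | inr hNE =>
      have hχbij : Function.Bijective χ := ⟨hχinj, hχsurj⟩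
      let E := Equiv.ofBijective χ hχbij
      let τ : Fin m → Fin m := E.symm
      have hτχ : ∀ k, τ (χ k) = k := fun k => E.symm_apply_apply k
      have hχτ : ∀ j, χ (τ j) = j := fun j => E.apply_symm_apply j
      -- construct blockwise bijections
      have key : ∀ j, ∃ v : X → X, Set.BijOn v (B j) (B (τ j)) ∧
          ∀ y ∈ f '' B (τ j), f (v y) = y := by
        intro j
        set i := τ j with hi
        have hSsub : f '' B i ⊆ B j := by
          have := hχ i
          rwa [hχτ j] at this
        have hcardji : Nat.card (B j) = Nat.card (B i) :=
          (hcard i j hSsub).symm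
        set s : X → X := fun y => if h : y ∈ f '' B i then h.choose else y with hs
        have hs1 : ∀ y ∈ f '' B i, s y ∈ B i ∧ f (s y) = y := by
          intro y hy
          simp only [hs, dif_pos hy]
          exact ⟨hy.choose_spec.1, hy.choose_spec.2⟩
        obtain ⟨v, hv1, hv2⟩ := exists_bijOn_extend hSsub hcardji s
          (fun y hy => (hs1 y hy).1)
          (fun y₁ h₁ y₂ h₂ heq => by
            rw [← (hs1 y₁ h₁).2, ← (hs1 y₂ h₂).2, heq])
        exact ⟨v, hv1, fun y hy => by rw [hv2 y hy]; exact (hs1 y hy).2⟩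
      choose v hv1 hv2 using key
      set u : X → X := fun x => v (idx x) x with hu
      have huB : ∀ j, ∀ x ∈ B j, u x = v j x := by
        intro j x hx
        rw [hu]
        simp only
        rw [huniq (hidx x) hx]
      have humaps : ∀ j, u '' B j ⊆ B (τ j) := by
        rintro j z ⟨x, hx, rfl⟩
        rw [huB j x hx]
        exact (hv1 j).mapsTo hx
      have huinj : Function.Injective u := by
        intro x₁ x₂ heq
        rcases eq_or_ne (idx x₁) (idx x₂) with h | h
        · rw [hu] at heq; simp only at heq
          rw [h] at heq
          exact (hv1 (idx x₂)).injOn (h ▸ hidx x₁) (hidx x₂) heq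
        · exfalso
          have h1 : u x₁ ∈ B (τ (idx x₁)) := humaps _ ⟨x₁, hidx x₁, rfl⟩
          have h2 : u x₂ ∈ B (τ (idx x₂)) := humaps _ ⟨x₂, hidx x₂, rfl⟩
          rw [heq] at h1
          exact h (E.symm.injective (huniq h1 h2))
      have husurj : Function.Surjective u := by
        intro z
        have hz : z ∈ B (τ (χ (idx z))) := by rw [hτχ]; exact hidx z
        obtain ⟨y, hy, hvy⟩ := (hv1 (χ (idx z))).surjOn hz
        exact ⟨y, by rw [huB _ y hy, hvy]⟩
      set g : X → X := Function.invFun u with hg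
      have hgu : ∀ x, g (u x) = x := Function.leftInverse_invFun huinj
      have hug : ∀ x, u (g x) = x := Function.rightInverse_invFun husurj
      have hgmaps : MapsInto B g := by
        intro k
        refine ⟨χ k, ?_⟩
        rintro z ⟨w, hw, rfl⟩
        have hw' : w ∈ B (τ (χ k)) := by rw [hτχ]; exact hw
        obtain ⟨y, hy, hvy⟩ := (hv1 (χ k)).surjOn hw'
        have : u y = w := by rw [huB _ y hy, hvy]
        rw [← this, hgu]
        exact hy
      refine ⟨u, ⟨fun j => ⟨τ j, humaps j⟩, g, hgmaps, funext hug, funext hgu⟩, ?_⟩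
      funext x
      have hfx : f x ∈ f '' B (idx x) := ⟨x, hidx x, rfl⟩
      have hfxj : f x ∈ B (χ (idx x)) := hχ (idx x) hfx
      have : u (f x) = v (χ (idx x)) (f x) := huB _ _ hfxj
      simp only [Function.comp_apply]
      rw [this, hv2 (χ (idx x)) (f x) (by rw [hτχ]; exact hfx)]
end

section
/- Let P be an (m,k)-partition of a finite set X, Q an r-subpartition of P containing at least one block of minimal size n_1, with r_i blocks of size n_i in Q for each i. Let A_Q = {f ∈ Γ(X,P) | the range of f is the union of the blocks of Q}. Then the number of idempotents in A_Q equals ∏_{i=1}^{k} ( Σ_{j=1}^{i} r_j · n_j! · S(n_i, n_j) )^{m_i − r_i}. -/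
open Function

lemma stirling2_eq_zero_of_lt : ∀ {a b : ℕ}, a < b → stirling2 a b = 0 := by
  intro a
  induction a with
  | zero =>
    intro b hb
    obtain ⟨s, rfl⟩ := Nat.exists_eq_add_of_lt hb
    rfl
  | succ a ih =>
    intro b hb
    obtain ⟨s, rfl⟩ := Nat.exists_eq_add_of_lt hb
    have hb' : a + 1 + s + 1 = (a + s + 1) + 1 := by omega
    rw [hb', show stirling2 (a + 1) ((a + s + 1) + 1) =
      ((a + s + 1) + 1) * stirling2 a ((a + s + 1) + 1) + stirling2 a (a + s + 1) from rfl,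
      ih (by omega), ih (by omega)]
    simp

def surjEquivOfEquiv {α β α' β' : Type*} (ea : α ≃ α') (eb : β ≃ β') :
    {f : α → β // Surjective f} ≃ {f : α' → β' // Surjective f} :=
  Equiv.subtypeEquiv (ea.arrowCongr eb) (by
    intro f
    simp [Equiv.arrowCongr, EquivLike.comp_surjective, EquivLike.surjective_comp])

lemma card_surj_congr {α β α' β' : Type*} (ea : α ≃ α') (eb : β ≃ β') :
    Nat.card {f : α → β // Surjective f} = Nat.card {f : α' → β' // Surjective f} :=
  Nat.card_congr (surjEquivOfEquiv ea eb)

-- the key recursion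
lemma surj_option_card (α β : Type*) [Fintype α] [Fintype β] [DecidableEq β] :
    Nat.card {f : Option α → β // Surjective f} =
      Fintype.card β * (Nat.card {f : α → β // Surjective f} +
        Nat.card {f : α → Fin (Fintype.card β - 1) // Surjective f}) := by
  classical
  -- step 1: equiv to pairs
  have e1 : {f : Option α → β // Surjective f} ≃
      {p : β × (α → β) // ∀ z, z = p.1 ∨ z ∈ Set.range p.2} := by
    refine Equiv.subtypeEquiv ((Equiv.piOptionEquivProd (β := fun _ => β))) ?_
    intro f
    constructor
    · intro hf z
      obtain ⟨x, hx⟩ := hf z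
      cases x with
      | none => exact Or.inl hx.symm
      | some a => exact Or.inr ⟨a, hx⟩
    · intro h z
      rcases h z with h | ⟨a, ha⟩
      · exact ⟨none, h.symm⟩
      · exact ⟨some a, ha⟩
  rw [Nat.card_congr e1,
    Nat.card_congr (Equiv.subtypeProdEquivSigmaSubtype fun y (g : α → β) => ∀ z, z = y ∨ z ∈ Set.range g),
    Nat.card_eq_fintype_card, Fintype.card_sigma]
  -- step 2: for each y, the fiber count
  have key : ∀ y : β, Nat.card {g : α → β // ∀ z, z = y ∨ z ∈ Set.range g} =
      Nat.card {f : α → β // Surjective f} +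
        Nat.card {f : α → Fin (Fintype.card β - 1) // Surjective f} := by
    intro y
    have split : Nat.card {g : α → β // ∀ z, z = y ∨ z ∈ Set.range g} =
        Nat.card {g : α → β // Surjective g} +
        Nat.card {g : α → β // (∀ z, z = y ∨ z ∈ Set.range g) ∧ ¬ Surjective g} := by
      classical
      rw [Nat.card_eq_fintype_card, Nat.card_eq_fintype_card, Nat.card_eq_fintype_card,
        Fintype.card_subtype, Fintype.card_subtype, Fintype.card_subtype]
      have h1 : (Finset.univ.filter fun g : α → β => Surjective g) =
          (Finset.univ.filter fun g : α → β => ∀ z, z = y ∨ z ∈ Set.range g).filter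
            fun g => Surjective g := by
        rw [Finset.filter_filter]
        ext g
        simp only [Finset.mem_filter, Finset.mem_univ, true_and]
        constructor
        · intro h; exact ⟨fun z => Or.inr (h z), h⟩
        · rintro ⟨-, h⟩; exact h
      have h2 : (Finset.univ.filter fun g : α → β =>
            (∀ z, z = y ∨ z ∈ Set.range g) ∧ ¬ Surjective g) =
          (Finset.univ.filter fun g : α → β => ∀ z, z = y ∨ z ∈ Set.range g).filter
            fun g => ¬ Surjective g := by
        rw [Finset.filter_filter]
      rw [h1, h2, Finset.card_filter_add_card_filter_not]
    rw [split]
    congr 1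
    -- the non-surjective part: equiv with surjections onto β \ {y}
    have e2 : {f : α → {z : β // z ≠ y} // Surjective f} ≃
        {g : α → β // (∀ z, z = y ∨ z ∈ Set.range g) ∧ ¬ Surjective g} := by
      refine ⟨fun f => ⟨fun a => (f.1 a).1, ?_, ?_⟩, fun g => ⟨fun a => ⟨g.1 a, ?_⟩, ?_⟩, ?_, ?_⟩
      · intro z
        by_cases hz : z = y
        · exact Or.inl hz
        · obtain ⟨a, ha⟩ := f.2 ⟨z, hz⟩
          exact Or.inr ⟨a, congrArg Subtype.val ha⟩
      · intro hs
        obtain ⟨a, ha⟩ := hs y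
        exact (f.1 a).2 ha
      · -- g a ≠ y
        intro h
        apply g.2.2
        intro z
        rcases g.2.1 z with rfl | hz
        · exact ⟨a, h⟩
        · exact hz
      · -- surjective restriction
        rintro ⟨z, hz⟩
        rcases g.2.1 z with rfl | ⟨a, ha⟩
        · exact absurd rfl hz
        · exact ⟨a, Subtype.ext ha⟩
      · intro f; ext a : 2; rfl
      · intro g; ext a : 2; rfl
    rw [← Nat.card_congr e2]
    refine card_surj_congr (Equiv.refl α) ?_
    refine (Fintype.equivFinOfCardEq ?_)
    rw [Fintype.card_subtype_compl, Fintype.card_subtype_eq]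
  simp only [← Nat.card_eq_fintype_card (α := _), key]
  simp [Finset.sum_const, Finset.card_univ, mul_comm]

lemma card_surj_fin : ∀ a b : ℕ,
    Nat.card {f : Fin a → Fin b // Surjective f} = b.factorial * stirling2 a b := by
  intro a
  induction a with
  | zero =>
    intro b
    cases b with
    | zero =>
      simp only [stirling2, Nat.factorial_zero, one_mul]
      exact Nat.card_eq_one_iff_unique.2
        ⟨⟨fun f g => Subtype.ext (funext fun x => x.elim0)⟩,
         ⟨⟨Fin.elim0, fun z => z.elim0⟩⟩⟩
    | succ s =>
      have : IsEmpty {f : Fin 0 → Fin (s+1) // Surjective f} := by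
        constructor; rintro ⟨f, hf⟩
        obtain ⟨x, -⟩ := hf 0
        exact x.elim0
      rw [Nat.card_of_isEmpty]
      simp [stirling2]
  | succ a ih =>
    intro b
    cases b with
    | zero =>
      have : IsEmpty {f : Fin (a+1) → Fin 0 // Surjective f} := by
        constructor; rintro ⟨f, -⟩
        exact (f 0).elim0
      rw [Nat.card_of_isEmpty]
      simp [stirling2]
    | succ s =>
      have e : Fin (a + 1) ≃ Option (Fin a) := finSuccEquiv a
      rw [card_surj_congr e (Equiv.refl (Fin (s+1))), surj_option_card]
      rw [ih (s+1)]
      have : Fintype.card (Fin (s+1)) - 1 = s := by simp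
      rw [this, ih s]
      simp only [Fintype.card_fin]
      show (s+1) * ((s+1).factorial * stirling2 a (s+1) + s.factorial * stirling2 a s) =
        (s+1).factorial * stirling2 (a+1) (s+1)
      rw [show stirling2 (a+1) (s+1) = (s + 1) * stirling2 a (s + 1) + stirling2 a s from rfl]
      rw [Nat.factorial_succ]
      ring

lemma card_surjections {α β : Type*} [Finite α] [Finite β] :
    Nat.card {f : α → β // Surjective f} =
      (Nat.card β).factorial * stirling2 (Nat.card α) (Nat.card β) := by
  obtain ⟨a, ⟨ea⟩⟩ := Finite.exists_equiv_fin α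
  obtain ⟨b, ⟨eb⟩⟩ := Finite.exists_equiv_fin β
  rw [card_surj_congr ea eb, card_surj_fin, Nat.card_eq_of_equiv_fin ea,
    Nat.card_eq_of_equiv_fin eb]

lemma card_AQ {X ι : Type*} (B : ι → Set X) (Q : Finset ι) (hP : IsPartition B) :
    Nat.card {f : X → X // MapsOnto B f ∧ f ∘ f = f ∧ Set.range f = ⋃ p ∈ Q, B p} =
    Nat.card (∀ p : {p : ι // p ∉ Q},
      Σ q : {q : ι // q ∈ Q}, {g : B p.1 → B q.1 // Surjective g}) := by
  classical
  obtain ⟨hne, hdisj, hcov⟩ := hP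
  -- block map
  have hex : ∀ x : X, ∃ p, x ∈ B p := by
    intro x
    have : x ∈ ⋃ i, B i := hcov ▸ Set.mem_univ x
    exact Set.mem_iUnion.1 this
  choose blk hblk using hex
  have huniq : ∀ (x : X) (p : ι), x ∈ B p → blk x = p := by
    intro x p hx
    by_contra h
    exact Set.disjoint_left.1 (hdisj h) (hblk x) hx
  have hBinj : ∀ p q : ι, (B p ∩ B q).Nonempty → p = q := by
    intro p q ⟨x, hxp, hxq⟩
    by_contra h
    exact Set.disjoint_left.1 (hdisj h) hxp hxq
  set F := ∀ p : {p : ι // p ∉ Q},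
      Σ q : {q : ι // q ∈ Q}, {g : B p.1 → B q.1 // Surjective g} with hF
  set Φ₀ : F → X → X := fun c x =>
    if h : blk x ∈ Q then x else ((c ⟨blk x, h⟩).2.1 ⟨x, hblk x⟩ : X) with hΦ₀
  -- basic computation lemmas
  have hB : ∀ (c : F) (x : X), blk x ∈ Q → Φ₀ c x = x := by
    intro c x h; simp only [hΦ₀, dif_pos h]
  have hC : ∀ (c : F) (p : {p : ι // p ∉ Q}) (x : X) (hx : x ∈ B p.1),
      Φ₀ c x = ((c p).2.1 ⟨x, hx⟩ : X) := by
    rintro c ⟨p, hp⟩ x hx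
    have hbp : blk x = p := huniq x p hx
    subst hbp
    simp only [hΦ₀, dif_neg hp]
  have hA : ∀ (c : F) (x : X), ∃ q ∈ Q, Φ₀ c x ∈ B q := by
    intro c x
    by_cases h : blk x ∈ Q
    · rw [hB c x h]; exact ⟨blk x, h, hblk x⟩
    · rw [hC c ⟨blk x, h⟩ x (hblk x)]
      exact ⟨(c ⟨blk x, h⟩).1.1, (c ⟨blk x, h⟩).1.2, ((c ⟨blk x, h⟩).2.1 _).2⟩
  -- Φ₀ c satisfies the conditions
  have hprop : ∀ c : F, MapsOnto B (Φ₀ c) ∧ Φ₀ c ∘ Φ₀ c = Φ₀ c ∧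
      Set.range (Φ₀ c) = ⋃ p ∈ Q, B p := by
    intro c
    refine ⟨?_, ?_, ?_⟩
    · intro p
      by_cases h : p ∈ Q
      · refine ⟨p, ?_⟩
        apply Set.eq_of_subset_of_subset
        · rintro y ⟨x, hx, rfl⟩
          rwa [hB c x ((huniq x p hx) ▸ h)]
        · intro y hy
          exact ⟨y, hy, hB c y ((huniq y p hy) ▸ h)⟩
      · refine ⟨(c ⟨p, h⟩).1.1, ?_⟩
        apply Set.eq_of_subset_of_subset
        · rintro y ⟨x, hx, rfl⟩
          rw [hC c ⟨p, h⟩ x hx]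
          exact ((c ⟨p, h⟩).2.1 _).2
        · intro y hy
          obtain ⟨z, hz⟩ := (c ⟨p, h⟩).2.2 ⟨y, hy⟩
          exact ⟨z.1, z.2, by rw [hC c ⟨p, h⟩ z.1 z.2]; exact congrArg Subtype.val hz⟩
    · funext x
      obtain ⟨q, hq, hmem⟩ := hA c x
      exact hB c (Φ₀ c x) ((huniq _ q hmem) ▸ hq)
    · apply Set.eq_of_subset_of_subset
      · rintro y ⟨x, rfl⟩
        obtain ⟨q, hq, hmem⟩ := hA c x
        exact Set.mem_biUnion hq hmem
      · intro y hy
        obtain ⟨q, hq, hmem⟩ := Set.mem_iUnion₂.1 hy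
        exact ⟨y, hB c y ((huniq y q hmem) ▸ hq)⟩
  set Φ : F → {f : X → X // MapsOnto B f ∧ f ∘ f = f ∧ Set.range f = ⋃ p ∈ Q, B p} :=
    fun c => ⟨Φ₀ c, hprop c⟩ with hΦ
  have hbij : Function.Bijective Φ := by
    constructor
    · -- injective
      intro c c' hcc
      have heq : ∀ x, Φ₀ c x = Φ₀ c' x := fun x => congrFun (congrArg Subtype.val hcc) x
      funext p
      have hval : ∀ z : B p.1, ((c p).2.1 z : X) = ((c' p).2.1 z : X) := by
        intro z
        rw [← hC c p z.1 z.2, ← hC c' p z.1 z.2]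
        exact heq z.1
      obtain ⟨z0, hz0⟩ := hne p.1
      have hq : (c p).1 = (c' p).1 := by
        apply Subtype.ext
        apply hBinj
        refine ⟨((c p).2.1 ⟨z0, hz0⟩ : X), ((c p).2.1 _).2, ?_⟩
        rw [hval ⟨z0, hz0⟩]
        exact ((c' p).2.1 _).2
      have sigma_ext : ∀ (s t : Σ q : {q : ι // q ∈ Q}, {g : B p.1 → B q.1 // Surjective g}),
          s.1 = t.1 → (∀ z, (s.2.1 z : X) = (t.2.1 z : X)) → s = t := by
        rintro ⟨q, g⟩ ⟨q', g'⟩ h hz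
        cases h
        exact congrArg (Sigma.mk q) (Subtype.ext (funext fun z => Subtype.ext (hz z)))
      exact sigma_ext (c p) (c' p) hq hval
    · -- surjective
      rintro ⟨f, hOnto, hIdem, hRange⟩
      have hidQ : ∀ (q : ι), q ∈ Q → ∀ x ∈ B q, f x = x := by
        intro q hq x hx
        have hxr : x ∈ Set.range f := by
          rw [hRange]; exact Set.mem_biUnion hq hx
        obtain ⟨z, rfl⟩ := hxr
        exact congrFun hIdem z
      have h1 : ∀ p : {p : ι // p ∉ Q}, ∃ q, f '' B p.1 = B q := fun p => hOnto p.1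
      choose tgt htgt using h1
      have htQ : ∀ p, tgt p ∈ Q := by
        intro p
        obtain ⟨y, hy⟩ := hne (tgt p)
        have hyr : y ∈ Set.range f := by
          rw [← htgt p] at hy
          obtain ⟨x, -, rfl⟩ := hy
          exact Set.mem_range_self x
        rw [hRange] at hyr
        obtain ⟨q, hq, hyq⟩ := Set.mem_iUnion₂.1 hyr
        rwa [hBinj (tgt p) q ⟨y, hy, hyq⟩]
      have hsurj : ∀ p : {p : ι // p ∉ Q}, Surjective fun z : B p.1 =>
          (⟨f z.1, (htgt p) ▸ Set.mem_image_of_mem f z.2⟩ : B (tgt p)) := by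
        intro p
        rintro ⟨y, hy⟩
        rw [← htgt p] at hy
        obtain ⟨x, hx, hfx⟩ := hy
        exact ⟨⟨x, hx⟩, Subtype.ext hfx⟩
      set c : F := fun p => ⟨⟨tgt p, htQ p⟩,
        ⟨fun z => ⟨f z.1, (htgt p) ▸ Set.mem_image_of_mem f z.2⟩, hsurj p⟩⟩ with hc
      refine ⟨c, ?_⟩
      apply Subtype.ext
      funext x
      show Φ₀ c x = f x
      by_cases h : blk x ∈ Q
      · rw [hB _ x h]
        exact (hidQ (blk x) h x (hblk x)).symm
      · rw [hC _ ⟨blk x, h⟩ x (hblk x)]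
  exact Nat.card_congr (Equiv.ofBijective Φ hbij).symm

/-- The number of idempotents of Γ(X,P) whose range is the union of the blocks of a
fixed r-subpartition Q (containing a block of the minimal size). -/
theorem card_idempotents_A_Q {X : Type*} [Finite X] {k : ℕ} [NeZero k] (n mcnt : Fin k → ℕ)
    (hmono : StrictMono n)
    (B : (Σ i : Fin k, Fin (mcnt i)) → Set X) (hP : IsPartition B)
    (hsize : ∀ i t, Nat.card (B ⟨i, t⟩) = n i)
    (Q : Finset (Σ i : Fin k, Fin (mcnt i))) (r : Fin k → ℕ)
    (hr : ∀ i, (Q.filter fun p => p.1 = i).card = r i)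
    (hr1 : 1 ≤ r 0) :
    Nat.card {f : X → X //
        MapsOnto B f ∧ f ∘ f = f ∧ Set.range f = ⋃ p ∈ Q, B p} =
      ∏ i : Fin k,
        (∑ j ∈ Finset.Iic i, r j * (n j).factorial * stirling2 (n i) (n j)) ^ (mcnt i - r i) := by
  classical
  letI : Fintype X := Fintype.ofFinite X
  set W : Fin k → ℕ :=
    fun i => ∑ j ∈ Finset.Iic i, r j * (n j).factorial * stirling2 (n i) (n j) with hW
  rw [card_AQ B Q hP, Nat.card_pi]
  -- sizes of blocks
  have hsz : ∀ p : (Σ i' : Fin k, Fin (mcnt i')), Nat.card (B p) = n p.1 := by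
    rintro ⟨i, t⟩; exact hsize i t
  -- inner sum
  have hinner : ∀ p : {p : (Σ i' : Fin k, Fin (mcnt i')) // p ∉ Q},
      Nat.card ((q : {q : (Σ i' : Fin k, Fin (mcnt i')) // q ∈ Q}) × {g : B p.1 → B q.1 // Surjective g}) = W p.1.1 := by
    intro p
    rw [Nat.card_eq_fintype_card, Fintype.card_sigma]
    have hterm : ∀ q : {q : (Σ i' : Fin k, Fin (mcnt i')) // q ∈ Q},
        Fintype.card {g : B p.1 → B q.1 // Surjective g} =
          (n q.1.1).factorial * stirling2 (n p.1.1) (n q.1.1) := by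
      intro q
      rw [← Nat.card_eq_fintype_card, card_surjections, hsz, hsz]
    rw [Finset.sum_congr rfl fun q _ => hterm q]
    rw [Finset.sum_coe_sort Q (fun q => (n q.1).factorial * stirling2 (n p.1.1) (n q.1))]
    rw [← Finset.sum_fiberwise_of_maps_to (t := Finset.univ) (g := Sigma.fst)
      (fun q _ => Finset.mem_univ _)]
    have hfib : ∀ j : Fin k,
        (∑ q ∈ Q.filter fun q => q.1 = j, (n q.1).factorial * stirling2 (n p.1.1) (n q.1)) =
          r j * ((n j).factorial * stirling2 (n p.1.1) (n j)) := by
      intro j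
      rw [Finset.sum_congr rfl (fun q hq => by rw [(Finset.mem_filter.1 hq).2]),
        Finset.sum_const, hr j, smul_eq_mul]
    rw [Finset.sum_congr rfl fun j _ => hfib j, hW]
    rw [← Finset.sum_subset (Finset.subset_univ (Finset.Iic p.1.1))]
    · exact Finset.sum_congr rfl fun j _ => by ring
    · intro j _ hj
      rw [stirling2_eq_zero_of_lt (hmono (by simpa using hj)), mul_zero, mul_zero]
  rw [Finset.prod_congr rfl fun p _ => hinner p]
  -- outer product, fiberwise over the first component
  rw [← Finset.prod_subtype (Finset.univ.filter fun p : (Σ i' : Fin k, Fin (mcnt i')) => p ∉ Q)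
    (fun p => by simp) (fun p : (Σ i' : Fin k, Fin (mcnt i')) => W p.1)]
  rw [← Finset.prod_fiberwise_of_maps_to (t := Finset.univ) (g := Sigma.fst)
    (fun q _ => Finset.mem_univ _) (fun p : (Σ i' : Fin k, Fin (mcnt i')) => W p.1)]
  refine Finset.prod_congr rfl fun i _ => ?_
  rw [Finset.prod_congr rfl (fun p hp => by rw [(Finset.mem_filter.1 hp).2]),
    Finset.prod_const]
  congr 1
  -- fiber cardinality: mcnt i - r i
  have htot : (Finset.univ.filter fun p : (Σ i' : Fin k, Fin (mcnt i')) => p.1 = i).card = mcnt i := by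
    rw [← Fintype.card_subtype]
    rw [Fintype.card_congr (Equiv.ofBijective
      (fun t : Fin (mcnt i) => (⟨⟨i, t⟩, rfl⟩ : {p : (Σ i' : Fin k, Fin (mcnt i')) // p.1 = i})) ?_).symm, Fintype.card_fin]
    constructor
    · intro t t' h
      exact sigma_mk_injective (β := fun j : Fin k => Fin (mcnt j)) (i := i)
        (Subtype.ext_iff.1 h)
    · rintro ⟨⟨j, t⟩, rfl⟩
      exact ⟨t, rfl⟩
  have hsplit := Finset.card_filter_add_card_filter_not
    (s := Finset.univ.filter fun p : (Σ i' : Fin k, Fin (mcnt i')) => p.1 = i) (p := fun p => p ∈ Q)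
  have hQfib : ((Finset.univ.filter fun p : (Σ i' : Fin k, Fin (mcnt i')) => p.1 = i).filter fun p => p ∈ Q).card = r i := by
    rw [← hr i]
    congr 1
    ext p
    simp [and_comm]
  have hfibeq : ((Finset.univ.filter fun p : (Σ i' : Fin k, Fin (mcnt i')) => p ∉ Q).filter fun p => p.1 = i) =
      ((Finset.univ.filter fun p : (Σ i' : Fin k, Fin (mcnt i')) => p.1 = i).filter fun p => p ∉ Q) := by
    ext p
    simp [and_comm]
  rw [hfibeq]
  omega
end
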